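/- Let M be a (2n+1)-dimensional real vector space, α a nonzero linear functional and ω an alternating 2-form such that α ∧ ω^n ≠ 0. Then there exists a unique vector R ∈ M with ω(R, ·) = 0 and α(R) = 1. -/

import Mathlib

open scoped TensorProduct

/-- Wedge product of two real-valued alternating forms indexed by `Fin`. -/
noncomputable def wedgeFin {M : Type*} [AddCommGroup M] [Module ℝ M] {a b : ℕ}
    (f : M [⋀^Fin a]→ₗ[ℝ] ℝ) (g : M [⋀^Fin b]→ₗ[ℝ] ℝ) :
    M [⋀^Fin (a + b)]→ₗ[ℝ] ℝ :=
  ((TensorProduct.lid ℝ ℝ).toLinearMap.compAlternatingMap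
    (f.domCoprod g)).domDomCongr finSumFinEquiv

/-- `n`-th wedge power of a 2-form. -/
noncomputable def wpow {M : Type*} [AddCommGroup M] [Module ℝ M]
    (ω : M [⋀^Fin 2]→ₗ[ℝ] ℝ) : (n : ℕ) → M [⋀^Fin (2 * n)]→ₗ[ℝ] ℝ
  | 0 => (AlternatingMap.constOfIsEmpty ℝ M (Fin 0) 1).domDomCongr (finCongr (by omega))
  | n + 1 => (wedgeFin ω (wpow ω n)).domDomCongr (finCongr (by ring))

/-- A linear functional as a 1-form (alternating map on `Fin 1`). -/
noncomputable def oneForm {M : Type*} [AddCommGroup M] [Module ℝ M]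
    (α : M →ₗ[ℝ] ℝ) : M [⋀^Fin 1]→ₗ[ℝ] ℝ :=
  AlternatingMap.ofSubsingleton ℝ M ℝ (0 : Fin 1) α

section Aux
variable {M : Type*} [AddCommGroup M] [Module ℝ M]

/-- `v` kills an alternating form if the form vanishes whenever `v` is one of the arguments. -/
def Kills (v : M) {ι : Type*} (T : M [⋀^ι]→ₗ[ℝ] ℝ) : Prop :=
  ∀ (x : ι → M) (i : ι), x i = v → T x = 0

theorem Kills.domDomCongr {v : M} {ι κ : Type*} {T : M [⋀^ι]→ₗ[ℝ] ℝ} (h : Kills v T)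
    (e : ι ≃ κ) : Kills v (T.domDomCongr e) := by
  intro x i hx
  rw [AlternatingMap.domDomCongr_apply]
  exact h _ (e.symm i) (by simp [hx])

theorem Kills.wedge {v : M} {a b : ℕ} {f : M [⋀^Fin a]→ₗ[ℝ] ℝ} {g : M [⋀^Fin b]→ₗ[ℝ] ℝ}
    (hf : Kills v f) (hg : Kills v g) : Kills v (_root_.wedgeFin f g) := by
  unfold wedgeFin
  refine Kills.domDomCongr ?_ _
  intro x i hx
  rw [LinearMap.compAlternatingMap_apply]
  suffices h : (f.domCoprod g) x = 0 by rw [h, map_zero]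
  rw [AlternatingMap.domCoprod_apply]
  rw [MultilinearMap.sum_apply]
  refine Finset.sum_eq_zero fun σ _ => ?_
  induction σ using Quotient.inductionOn' with
  | h σ =>
    rw [AlternatingMap.domCoprod.summand_mk'']
    simp only [MultilinearMap.smul_apply, MultilinearMap.domDomCongr_apply,
      MultilinearMap.domCoprod_apply, AlternatingMap.coe_multilinearMap]
    rcases h : σ.symm i with k | k
    · have : x (σ (Sum.inl k)) = v := by
        rw [← h]; simpa using hx
      rw [hf (fun j => x (σ (Sum.inl j))) k this, TensorProduct.zero_tmul, smul_zero]
    · have : x (σ (Sum.inr k)) = v := by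
        rw [← h]; simpa using hx
      rw [hg (fun j => x (σ (Sum.inr j))) k this, TensorProduct.tmul_zero, smul_zero]

theorem update_vecCons_zero (u x w : M) :
    Function.update ![u, w] (0 : Fin 2) x = ![x, w] := by
  funext i; fin_cases i <;> simp

theorem update_vecCons_one (u x w : M) :
    Function.update ![u, w] (1 : Fin 2) x = ![u, x] := by
  funext i; fin_cases i <;> simp

/-- The bilinear form associated with an alternating 2-form. -/
noncomputable def bform (ω : M [⋀^Fin 2]→ₗ[ℝ] ℝ) : LinearMap.BilinForm ℝ M :=
  LinearMap.mk₂ ℝ (fun v w => ω ![v, w])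
    (fun u u' w => by
      have h := ω.toMultilinearMap.map_update_add ![u, w] 0 u u'
      simpa [update_vecCons_zero] using h)
    (fun c u w => by
      have h := ω.toMultilinearMap.map_update_smul ![u, w] 0 c u
      simpa [update_vecCons_zero] using h)
    (fun u w w' => by
      have h := ω.toMultilinearMap.map_update_add ![u, w] 1 w w'
      simpa [update_vecCons_one] using h)
    (fun c u w => by
      have h := ω.toMultilinearMap.map_update_smul ![u, w] 1 c w
      simpa [update_vecCons_one] using h)

theorem bform_apply (ω : M [⋀^Fin 2]→ₗ[ℝ] ℝ) (v w : M) : bform ω v w = ω ![v, w] := rfl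

theorem bform_skew (ω : M [⋀^Fin 2]→ₗ[ℝ] ℝ) (x y : M) : bform ω x y = - bform ω y x := by
  have h : ∀ u : M, bform ω u u = 0 := fun u =>
    ω.map_eq_zero_of_eq ![u, u] (i := 0) (j := 1) rfl (by decide)
  have h2 := h (x + y)
  simp only [map_add, LinearMap.add_apply, h x, h y] at h2
  linarith

/-- An alternating 2-form on an odd-dimensional space has a nonzero radical vector. -/
theorem exists_radical [FiniteDimensional ℝ M] (n : ℕ)
    (hdim : Module.finrank ℝ M = 2 * n + 1) (ω : M [⋀^Fin 2]→ₗ[ℝ] ℝ) :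
    ∃ v : M, v ≠ 0 ∧ ∀ w, ω ![v, w] = 0 := by
  classical
  set B := bform ω with hB
  let b : Module.Basis (Fin (2 * n + 1)) ℝ M := Module.finBasisOfFinrankEq ℝ M hdim
  have hdet : (LinearMap.BilinForm.toMatrix b B).det = 0 := by
    have hskew : (LinearMap.BilinForm.toMatrix b B).transpose = -(LinearMap.BilinForm.toMatrix b B) := by
      ext i j
      simp only [Matrix.transpose_apply, Matrix.neg_apply, LinearMap.BilinForm.toMatrix_apply]
      rw [bform_skew]
    have h := congrArg Matrix.det hskew
    rw [Matrix.det_transpose, Matrix.det_neg, Fintype.card_fin] at h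
    have hodd : ((-1 : ℝ) ^ (2 * n + 1)) = -1 := Odd.neg_one_pow ⟨n, by ring⟩
    rw [hodd] at h
    linarith
  have hnd : ¬ B.Nondegenerate := by
    rw [LinearMap.BilinForm.nondegenerate_iff_det_ne_zero b]
    simpa using hdet
  have h : ¬ ∀ m : M, (∀ w : M, B m w = 0) → m = 0 := by
    exact fun hs => hnd ((LinearMap.IsRefl.nondegenerate_iff_separatingLeft (B := B)
      (fun x y hxy => by
        show bform ω y x = 0
        rw [bform_skew]
        exact neg_eq_zero.mpr hxy)).mpr hs)
  push_neg at h
  obtain ⟨v, hv, hv0⟩ := h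
  exact ⟨v, hv0, fun w => hv w⟩

/-- A vector in the radical of `ω` and the kernel of `α` must vanish. -/
theorem radical_ker_trivial [FiniteDimensional ℝ M] {n : ℕ}
    (hdim : Module.finrank ℝ M = 2 * n + 1)
    {α : M →ₗ[ℝ] ℝ} {ω : M [⋀^Fin 2]→ₗ[ℝ] ℝ}
    (hvol : wedgeFin (oneForm α) (wpow ω n) ≠ 0)
    {v : M} (hrad : ∀ w, ω ![v, w] = 0) (hker : α v = 0) : v = 0 := by
  classical
  by_contra hv0
  have k1 : Kills v (oneForm α) := by
    intro x i hx
    have hi : i = 0 := Subsingleton.elim _ _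
    subst hi
    simp [oneForm, hx, hker]
  have k2 : Kills v ω := by
    intro x i hx
    have hxe : x = ![x 0, x 1] := by funext j; fin_cases j <;> rfl
    fin_cases i
    · have h0 : x 0 = v := hx
      rw [hxe, h0]
      exact hrad _
    · have h1 : x 1 = v := hx
      rw [hxe, h1]
      have hs : (![v, x 0] : Fin 2 → M) ∘ (Equiv.swap 0 1) = ![x 0, v] := by
        funext j; fin_cases j <;> simp
      rw [← hs, AlternatingMap.map_swap _ _ (by decide : (0 : Fin 2) ≠ 1), hrad, neg_zero]
  have k3 : ∀ m, Kills v (wpow ω m) := by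
    intro m
    induction m with
    | zero => intro x i _; exact absurd i.2 (by omega)
    | succ m ih =>
      show Kills v ((wedgeFin ω (wpow ω m)).domDomCongr (finCongr (by ring)))
      exact Kills.domDomCongr (k2.wedge ih) _
  have kT : Kills v (wedgeFin (oneForm α) (wpow ω n)) := k1.wedge (k3 n)
  have hli : LinearIndepOn ℝ id ({v} : Set M) := LinearIndepOn.singleton hv0
  let b := Module.Basis.extend hli
  haveI : Fintype (hli.extend (Set.subset_univ ({v} : Set M))) :=
    FiniteDimensional.fintypeBasisIndex b
  have hcard : Fintype.card (hli.extend (Set.subset_univ ({v} : Set M))) = 1 + 2 * n := by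
    rw [← Module.finrank_eq_card_basis b, hdim]; omega
  let e : (hli.extend (Set.subset_univ ({v} : Set M))) ≃ Fin (1 + 2 * n) :=
    Fintype.equivFinOfCardEq hcard
  have hvmem : v ∈ hli.extend (Set.subset_univ ({v} : Set M)) :=
    hli.subset_extend _ rfl
  let jv : (hli.extend (Set.subset_univ ({v} : Set M))) := ⟨v, hvmem⟩
  let i0 : Fin (1 + 2 * n) := ⟨0, by omega⟩
  let e' := e.trans (Equiv.swap (e jv) i0)
  let b' := b.reindex e'
  have h1 : e'.symm i0 = jv := by
    simp only [e', Equiv.symm_trans_apply, Equiv.symm_swap, Equiv.swap_apply_right,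
      Equiv.symm_apply_apply]
  have hb'0 : b' i0 = v := by
    rw [Module.Basis.reindex_apply, h1]
    exact Module.Basis.extend_apply_self hli jv
  have hT0 : wedgeFin (oneForm α) (wpow ω n) = 0 := by
    have hrep := (wedgeFin (oneForm α) (wpow ω n)).eq_smul_basis_det b'
    rw [hrep, kT (⇑b') i0 hb'0, zero_smul]
  exact hvol hT0

end Aux

/-- the Reeb vector of a linear cosymplectic structure: if
`α ∧ ω^n ≠ 0` on a `(2n+1)`-dimensional real vector space then there is a
unique vector `R` with `ω(R,·) = 0` and `α(R) = 1`. -/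
theorem stmt3 {M : Type*} [AddCommGroup M] [Module ℝ M] [FiniteDimensional ℝ M]
    (n : ℕ) (hdim : Module.finrank ℝ M = 2 * n + 1)
    (α : M →ₗ[ℝ] ℝ) (hα : α ≠ 0)
    (ω : M [⋀^Fin 2]→ₗ[ℝ] ℝ)
    (hvol : wedgeFin (oneForm α) (wpow ω n) ≠ 0) :
    ∃! R : M, (∀ w : M, ω ![R, w] = 0) ∧ α R = 1 := by
  classical
  obtain ⟨v, hv0, hrad⟩ := exists_radical n hdim ω
  have hαv : α v ≠ 0 := fun h => hv0 (radical_ker_trivial hdim hvol hrad h)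
  refine ⟨(α v)⁻¹ • v, ⟨?_, ?_⟩, ?_⟩
  · intro w
    rw [← bform_apply, map_smul, LinearMap.smul_apply, bform_apply, hrad, smul_zero]
  · rw [map_smul, smul_eq_mul, inv_mul_cancel₀ hαv]
  · rintro R' ⟨hR'rad, hR'α⟩
    have hd : ∀ w, ω ![R' - (α v)⁻¹ • v, w] = 0 := by
      intro w
      rw [← bform_apply, map_sub, map_smul, LinearMap.sub_apply, LinearMap.smul_apply,
        bform_apply, bform_apply, hrad, hR'rad, smul_zero, sub_zero]
    have hαd : α (R' - (α v)⁻¹ • v) = 0 := by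
      rw [map_sub, map_smul, hR'α, smul_eq_mul, inv_mul_cancel₀ hαv, sub_self]
    have h0 := radical_ker_trivial hdim hvol hd hαd
    rw [sub_eq_zero] at h0
    exact h0
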